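/- For any star S and any tree T on n vertices, gm(S □ T) ≤ gm(S ⊠ T) ≤ gm(S · T) < √(3n+1) + 1, where □, ⊠, · denote the Cartesian, strong and lexicographic products respectively. -/

import Mathlib

open SimpleGraph

/-- `G` is a minor of `H`: there is a model of `G` in `H`, i.e. a family of pairwise
disjoint branch sets, each inducing a connected subgraph of `H`, with an edge of `H`
between the branch sets of any two adjacent vertices of `G`. -/
def SimpleGraph.IsMinorOf {α : Type*} {β : Type*} (G : SimpleGraph α) (H : SimpleGraph β) :
    Prop :=
  ∃ B : α → Set β,
    (∀ x, (H.induce (B x)).Connected) ∧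
    (Pairwise fun x y => Disjoint (B x) (B y)) ∧
    (∀ ⦃x y⦄, G.Adj x y → ∃ a ∈ B x, ∃ b ∈ B y, H.Adj a b)

/-- The strong product of two simple graphs. -/
def strongProd {α β : Type*} (G : SimpleGraph α) (H : SimpleGraph β) :
    SimpleGraph (α × β) where
  Adj a b := (a.1 = b.1 ∧ H.Adj a.2 b.2) ∨ (a.2 = b.2 ∧ G.Adj a.1 b.1) ∨
             (G.Adj a.1 b.1 ∧ H.Adj a.2 b.2)
  symm := by
    constructor
    rintro a b (⟨h1, h2⟩ | ⟨h1, h2⟩ | ⟨h1, h2⟩)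
    · exact Or.inl ⟨h1.symm, h2.symm⟩
    · exact Or.inr (Or.inl ⟨h1.symm, h2.symm⟩)
    · exact Or.inr (Or.inr ⟨h1.symm, h2.symm⟩)
  loopless := by
    constructor
    rintro a (⟨_, h⟩ | ⟨_, h⟩ | ⟨h, _⟩)
    · exact H.irrefl h
    · exact G.irrefl h
    · exact G.irrefl h

/-- The lexicographic product of two simple graphs. -/
def lexProd {α β : Type*} (G : SimpleGraph α) (H : SimpleGraph β) :
    SimpleGraph (α × β) where
  Adj a b := G.Adj a.1 b.1 ∨ (a.1 = b.1 ∧ H.Adj a.2 b.2)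
  symm := by
    constructor
    rintro a b (h | ⟨h1, h2⟩)
    · exact Or.inl h.symm
    · exact Or.inr ⟨h1.symm, h2.symm⟩
  loopless := by
    constructor
    rintro a (h | ⟨_, h⟩)
    · exact G.irrefl h
    · exact H.irrefl h

/-- The `k × k` grid graph: vertices `{0,…,k-1}²`, two vertices adjacent iff they differ
by exactly one in exactly one coordinate. -/
def gridGraph (k : ℕ) : SimpleGraph (Fin k × Fin k) :=
  SimpleGraph.fromRel (fun a b =>
    (a.1 = b.1 ∧ a.2.val + 1 = b.2.val) ∨ (a.2 = b.2 ∧ a.1.val + 1 = b.1.val))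

/-- The star with `n` leaves: the root `none` is adjacent to each leaf `some i`. -/
def starGraph (n : ℕ) : SimpleGraph (Option (Fin n)) :=
  SimpleGraph.fromRel (fun a b => a = none ∧ b ≠ none)

/-- The subdivided star `S_{ℓ,p}`: a star with `ℓ` leaves, each edge subdivided `p-1`
times, i.e. a centre `none` with `ℓ` pendant paths `some (i, 0), …, some (i, p-1)`. -/
def subStar (ℓ p : ℕ) : SimpleGraph (Option (Fin ℓ × Fin p)) :=
  SimpleGraph.fromRel (fun a b =>
    (a = none ∧ ∃ (i : Fin ℓ) (j : Fin p), j.val = 0 ∧ b = some (i, j)) ∨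
    (∃ (i : Fin ℓ) (j k : Fin p), a = some (i, j) ∧ b = some (i, k) ∧ j.val + 1 = k.val))

/-- `G` admits a tree-decomposition of width at most `w`: there is a tree `T` (indexed by
`ℕ`) and bags such that every vertex and every edge of `G` lies in some bag, for every
vertex of `G` the set of nodes whose bag contains it induces a non-empty connected
subtree of `T`, and every bag has at most `w + 1` vertices. -/
def HasDecompWidth {V : Type*} (G : SimpleGraph V) (w : ℕ) : Prop :=
  ∃ (T : SimpleGraph ℕ) (bag : ℕ → Finset V),
    T.IsTree ∧
    (∀ v : V, ∃ i, v ∈ bag i) ∧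
    (∀ u v : V, G.Adj u v → ∃ i, u ∈ bag i ∧ v ∈ bag i) ∧
    (∀ v : V, (T.induce {i | v ∈ bag i}).Connected) ∧
    (∀ i, (bag i).card ≤ w + 1)

/-- The treewidth of a finite graph: the minimum width of a tree-decomposition. -/
noncomputable def treewidth {V : Type*} [Fintype V] (G : SimpleGraph V) : ℕ :=
  sInf { w | HasDecompWidth G w }

/-- `gm G`: the maximum `k` such that the `k × k` grid is a minor of `G`. -/
noncomputable def gridMinorNum {V : Type*} (G : SimpleGraph V) : ℕ :=
  sSup { k | (gridGraph k).IsMinorOf G }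

/-- A walk in a tree rooted at `r` is vertical if it contains at most one vertex of
each depth (distance from the root). -/
def IsVertical {V : Type*} (T : SimpleGraph V) (r : V) {u w : V} (p : T.Walk u w) : Prop :=
  ∀ x ∈ p.support, ∀ y ∈ p.support, T.dist r x = T.dist r y → x = y

/-- In the tree `T` rooted at `r`, `v` is an ancestor of `w`: `v` lies on the unique
path from `r` to `w` (in a tree this is equivalent to this distance identity). -/
def Ancestor {V : Type*} (T : SimpleGraph V) (r v w : V) : Prop :=
  T.dist r w = T.dist r v + T.dist v w

/-- Two vertices of a rooted tree are related if one is an ancestor of the other. -/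
def Related {V : Type*} (T : SimpleGraph V) (r v w : V) : Prop :=
  Ancestor T r v w ∨ Ancestor T r w v

/-- The height of `v` in the tree `T` rooted at `r`: the maximum order (number of
vertices) of a vertical path whose upper (minimum-depth) endpoint is `v`. -/
noncomputable def height {V : Type*} (T : SimpleGraph V) (r v : V) : ℕ :=
  sSup { n | ∃ (w : V) (p : T.Walk v w), p.IsPath ∧ IsVertical T r p ∧
      (∀ x ∈ p.support, T.dist r v ≤ T.dist r x) ∧ p.support.length = n }

/-- The radius of a finite graph: the least `e` such that some vertex is within
distance `e` of every vertex. -/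
noncomputable def graphRadius {V : Type*} [Fintype V] (T : SimpleGraph V) : ℕ :=
  sInf { e | ∃ v, ∀ w, T.dist v w ≤ e }


section Helpers

open SimpleGraph

lemma induce_walk_exists {V : Type*} (G : SimpleGraph V) (s : Set V) :
    ∀ {x y : s} (_ : (G.induce s).Walk x y),
      ∃ p : G.Walk x.val y.val, ∀ z ∈ p.support, z ∈ s := by
  intro x y w
  induction w with
  | nil => exact ⟨Walk.nil, by simp⟩
  | @cons a b c h q ih =>
    obtain ⟨p, hp⟩ := ih
    refine ⟨Walk.cons (by simpa using h) p, ?_⟩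
    intro z hz
    rw [Walk.support_cons] at hz
    rcases List.mem_cons.1 hz with rfl | hz
    · exact a.2
    · exact hp z hz


lemma isPath_concat {V : Type*} {G : SimpleGraph V} {u v w : V} {p : G.Walk u v}
    (hp : p.IsPath) (hw : w ∉ p.support) (h : G.Adj v w) : (p.concat h).IsPath := by
  rw [← Walk.isPath_reverse_iff, Walk.reverse_concat]
  exact hp.reverse.cons (by simpa using hw)

lemma tree_path_length {V : Type*} {G : SimpleGraph V} (hG : G.IsTree) {u v : V}
    (p : G.Walk u v) (hp : p.IsPath) : p.length = G.dist u v := by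
  obtain ⟨q, hq, hql⟩ := (hG.isConnected u v).exists_path_of_dist
  rw [← hql]
  exact congrArg Walk.length ((hG.existsUnique_path u v).unique hp hq)

lemma tree_adj_dist {V : Type*} [DecidableEq V] {G : SimpleGraph V} (hG : G.IsTree) (r : V)
    {a b : V} (h : G.Adj a b) :
    G.dist r b + 1 = G.dist r a ∨ G.dist r a + 1 = G.dist r b := by
  obtain ⟨p, hp, hpl⟩ := (hG.isConnected r a).exists_path_of_dist
  by_cases hb : b ∈ p.support
  · left
    have h1 : (p.dropUntil b hb).IsPath := hp.dropUntil hb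
    have h2 : (Walk.cons h.symm Walk.nil : G.Walk b a).IsPath := by
      simp [Walk.isPath_def, h.ne']
    have he := (hG.existsUnique_path b a).unique h1 h2
    have hlen : (p.takeUntil b hb).length + (p.dropUntil b hb).length = p.length := by
      rw [← Walk.length_append, p.take_spec hb]
    have hd : (p.dropUntil b hb).length = 1 := by rw [he]; simp
    have ht : (p.takeUntil b hb).length = G.dist r b :=
      tree_path_length hG _ (hp.takeUntil hb)
    omega
  · right
    have h1 : (p.concat h).IsPath := isPath_concat hp hb h
    have := tree_path_length hG _ h1
    rw [Walk.length_concat] at this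
    omega

lemma tree_parent_unique {V : Type*} [DecidableEq V] {G : SimpleGraph V} (hG : G.IsTree) (r : V)
    {x y₁ y₂ : V} (h1 : G.Adj x y₁) (h2 : G.Adj x y₂)
    (hd1 : G.dist r y₁ + 1 = G.dist r x) (hd2 : G.dist r y₂ + 1 = G.dist r x) :
    y₁ = y₂ := by
  have build : ∀ {y : V} (hy : G.Adj x y) (_ : G.dist r y + 1 = G.dist r x),
      ∃ p : G.Walk r y, p.IsPath ∧ (p.concat hy.symm).IsPath := by
    intro y hy hdy
    obtain ⟨p, hp, hpl⟩ := (hG.isConnected r y).exists_path_of_dist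
    refine ⟨p, hp, isPath_concat hp (fun hx => ?_) hy.symm⟩
    have := tree_path_length hG _ (hp.takeUntil hx)
    have h3 := Walk.length_takeUntil_le p hx
    -- dist r x ≤ p.length = dist r y = dist r x - 1, contradiction
    omega
  obtain ⟨p1, hp1, hc1⟩ := build h1 hd1
  obtain ⟨p2, hp2, hc2⟩ := build h2 hd2
  have he := (hG.existsUnique_path r x).unique hc1 hc2
  have : (p1.concat h1.symm).reverse.getVert 1 = (p2.concat h2.symm).reverse.getVert 1 := by
    rw [he]
  rwa [Walk.reverse_concat, Walk.reverse_concat, Walk.getVert_cons_succ, Walk.getVert_cons_succ,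
    Walk.getVert_zero, Walk.getVert_zero] at this

lemma tree_down_or_up {V : Type*} [DecidableEq V] {G : SimpleGraph V} (hG : G.IsTree) (r : V) :
    ∀ {a c : V} (p : G.Walk a c), p.IsPath →
      p.Nil ∨ (∃ x ∈ p.support, G.Adj a x ∧ G.dist r x + 1 = G.dist r a) ∨
        G.dist r a < G.dist r c := by
  intro a c p
  induction p with
  | nil => exact fun _ => Or.inl Walk.nil_nil
  | @cons a x c h q ih =>
    intro hp
    have hq : q.IsPath := hp.of_cons
    have hax : a ∉ q.support := by
      have := hp.support_nodup
      simp only [Walk.support_cons, List.nodup_cons] at this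
      exact this.1
    rcases tree_adj_dist hG r h with hd | hd
    · exact Or.inr (Or.inl ⟨x, by simp, h, hd⟩)
    · rcases ih hq with hnil | hmid | hlt
      · right; right
        have : x = c := hnil.eq
        subst this
        omega
      · obtain ⟨y, hy, hxy, hdy⟩ := hmid
        exact absurd (tree_parent_unique hG r hxy h.symm hdy (by omega) ▸ hy) hax
      · right; right; omega

lemma contract_forest {V ι : Type*} [Fintype V] [DecidableEq V] [DecidableEq ι]
    {G : SimpleGraph V} (hG : G.IsTree)
    (A : Finset ι) (hA : A.Nonempty) (C : ι → Set V)
    (hdisj : ∀ v ∈ A, ∀ w ∈ A, v ≠ w → Disjoint (C v) (C w))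
    (hconn : ∀ v ∈ A, (G.induce (C v)).Connected)
    (P : Finset (ι × ι))
    (hP : ∀ p ∈ P, p.1 ∈ A ∧ p.2 ∈ A ∧ p.1 ≠ p.2 ∧ ∃ a ∈ C p.1, ∃ b ∈ C p.2, G.Adj a b)
    (hsym : ∀ p ∈ P, ∀ q ∈ P, p.1 = q.2 → p.2 = q.1 → p = q) :
    P.card + 1 ≤ A.card := by
  classical
  have hVne : Nonempty V := hG.isConnected.nonempty
  obtain ⟨r⟩ := id hVne
  set d : V → ℕ := fun x => G.dist r x with hd
  -- nonemptiness of branch sets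
  have hCne : ∀ v ∈ A, (C v).Nonempty := by
    intro v hv
    have := (hconn v hv).nonempty
    obtain ⟨⟨x, hx⟩⟩ := this
    exact ⟨x, hx⟩
  -- roots: minimum depth elements
  have hrt : ∀ v, v ∈ A → ∃ a, a ∈ C v ∧ ∀ b ∈ C v, d a ≤ d b := by
    intro v hv
    obtain ⟨a, ha, hmin⟩ := Set.exists_min_image (C v) d (Set.toFinite _) (hCne v hv)
    exact ⟨a, ha, hmin⟩
  choose! rt hrtmem hrtmin using hrt
  -- paths within branch sets
  have hpathC : ∀ v ∈ A, ∀ a ∈ C v, ∃ p : G.Walk a (rt v), p.IsPath ∧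
      ∀ z ∈ p.support, z ∈ C v := by
    intro v hv a ha
    obtain ⟨w⟩ := (hconn v hv).preconnected ⟨a, ha⟩ ⟨rt v, hrtmem v hv⟩
    obtain ⟨p, hp⟩ := induce_walk_exists G (C v) w
    exact ⟨p.bypass, p.bypass_isPath, fun z hz => hp z (p.support_bypass_subset hz)⟩
  -- K1 : a child vertex whose parent is outside its branch set is the root
  have hK1 : ∀ v ∈ A, ∀ a ∈ C v, ∀ b, G.Adj a b → d b + 1 = d a → b ∉ C v → a = rt v := by
    intro v hv a ha b hab hdb hbC
    by_contra hne
    obtain ⟨p, hp, hpsupp⟩ := hpathC v hv a ha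
    rcases tree_down_or_up hG r p hp with hnil | hmid | hlt
    · exact hne hnil.eq
    · obtain ⟨x, hx, hax, hdx⟩ := hmid
      exact hbC (tree_parent_unique hG r hax hab hdx hdb ▸ hpsupp x hx)
    · have h1 := hrtmin v hv a ha
      simp only [hd] at h1
      omega
  -- choose a cross edge for each pair
  have hPedge : ∀ p : ι × ι, p ∈ P → ∃ ab : V × V, ab.1 ∈ C p.1 ∧ ab.2 ∈ C p.2 ∧
      G.Adj ab.1 ab.2 := by
    intro p hp
    obtain ⟨-, -, -, a, ha, b, hb, hadj⟩ := hP p hp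
    exact ⟨(a, b), ha, hb, hadj⟩
  choose! f hf1 hf2 hf3 using hPedge
  -- the map: child side of each pair
  set Φ : ι × ι → ι := fun p => if d ((f p).2) + 1 = d ((f p).1) then p.1 else p.2 with hΦ
  have key : ∀ p ∈ P, ∃ o : ι, ∃ b : V, o ∈ A ∧ Φ p ∈ A ∧ o ≠ Φ p ∧
      G.Adj (rt (Φ p)) b ∧ d b + 1 = d (rt (Φ p)) ∧ b ∈ C o ∧
      ((p.1 = Φ p ∧ p.2 = o) ∨ (p.1 = o ∧ p.2 = Φ p)) := by
    intro p hp
    obtain ⟨h1, h2, hne, -⟩ := hP p hp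
    have hadj := hf3 p hp
    have hdisj12 : Disjoint (C p.1) (C p.2) := hdisj _ h1 _ h2 hne
    by_cases hc : d ((f p).2) + 1 = d ((f p).1)
    · have hΦp : Φ p = p.1 := by simp [hΦ, hc]
      have hroot : (f p).1 = rt p.1 :=
        hK1 p.1 h1 _ (hf1 p hp) _ hadj hc
          (fun hmem => (Set.disjoint_left.1 hdisj12) hmem (hf2 p hp))
      exact ⟨p.2, (f p).2, h2, hΦp ▸ h1, fun h => hne (hΦp ▸ h).symm,
        by rw [hΦp, ← hroot]; exact hadj, by rw [hΦp, ← hroot]; exact hc,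
        hf2 p hp, Or.inl ⟨hΦp.symm, rfl⟩⟩
    · have hΦp : Φ p = p.2 := by simp [hΦ, hc]
      rcases tree_adj_dist hG r hadj with hc' | hc'
      · exact absurd hc' hc
      have hroot : (f p).2 = rt p.2 :=
        hK1 p.2 h2 _ (hf2 p hp) _ hadj.symm hc'
          (fun hmem => (Set.disjoint_right.1 hdisj12) hmem (hf1 p hp))
      exact ⟨p.1, (f p).1, h1, hΦp ▸ h2, fun h => hne (hΦp ▸ h),
        by rw [hΦp, ← hroot]; exact hadj.symm, by rw [hΦp, ← hroot]; exact hc',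
        hf1 p hp, Or.inr ⟨rfl, hΦp.symm⟩⟩
  -- minimal-depth-root element of A
  obtain ⟨v₀, hv₀A, hv₀min⟩ := Finset.exists_min_image A (fun v => d (rt v)) hA
  -- Φ maps into A.erase v₀
  have hmaps : ∀ p ∈ P, Φ p ∈ A.erase v₀ := by
    intro p hp
    obtain ⟨o, b, hoA, hΦA, hone, hadj, hdb, hbC, -⟩ := key p hp
    refine Finset.mem_erase.2 ⟨?_, hΦA⟩
    rintro rfl
    have : d (rt o) ≤ d b := hrtmin o hoA b hbC
    have := hv₀min o hoA
    omega
  -- injectivity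
  have hinj : ∀ p ∈ P, ∀ q ∈ P, Φ p = Φ q → p = q := by
    intro p hp q hq heq
    obtain ⟨op, bp, hopA, hΦpA, -, hadjp, hdbp, hbpC, hcasep⟩ := key p hp
    obtain ⟨oq, bq, hoqA, hΦqA, -, hadjq, hdbq, hbqC, hcaseq⟩ := key q hq
    rw [heq] at hadjp hdbp
    have hb : bp = bq := tree_parent_unique hG r hadjp hadjq hdbp hdbq
    subst hb
    have ho : op = oq := by
      by_contra hne
      exact (Set.disjoint_left.1 (hdisj _ hopA _ hoqA hne)) hbpC hbqC
    subst ho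
    rcases hcasep with ⟨e1, e2⟩ | ⟨e1, e2⟩ <;> rcases hcaseq with ⟨e3, e4⟩ | ⟨e3, e4⟩
    · exact Prod.ext (by rw [e1, heq, ← e3]) (by rw [e2, ← e4])
    · exact hsym p hp q hq (by rw [e1, heq, ← e4]) (by rw [e2, ← e3])
    · exact hsym p hp q hq (by rw [e1, ← e4]) (by rw [e2, heq, ← e3])
    · exact Prod.ext (by rw [e1, ← e3]) (by rw [e2, heq, ← e4])
  have hcard := Finset.card_le_card_of_injOn Φ hmaps (fun p hp q hq => hinj p hp q hq)
  rw [Finset.card_erase_of_mem hv₀A] at hcard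
  have : 1 ≤ A.card := Finset.card_pos.2 hA
  omega

lemma lexProd_adj {α β : Type*} (G : SimpleGraph α) (H : SimpleGraph β) (a b : α × β) :
    (lexProd G H).Adj a b ↔ G.Adj a.1 b.1 ∨ (a.1 = b.1 ∧ H.Adj a.2 b.2) := Iff.rfl

lemma star_not_adj_some {m : ℕ} (i j : Fin m) : ¬ (_root_.starGraph m).Adj (some i) (some j) := by
  simp [_root_.starGraph]

lemma lex_step {m n : ℕ} {T : SimpleGraph (Fin n)} {x y : Option (Fin m) × Fin n}
    (h : (lexProd (_root_.starGraph m) T).Adj x y) (hxy : x.1 = y.1) : T.Adj x.2 y.2 := by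
  rcases h with h | ⟨-, h⟩
  · rw [hxy] at h; exact absurd h (SimpleGraph.irrefl _)
  · exact h

lemma lex_step_fst {m n : ℕ} {T : SimpleGraph (Fin n)} {x y : Option (Fin m) × Fin n}
    (h : (lexProd (_root_.starGraph m) T).Adj x y) (hx : x.1 ≠ none) (hy : y.1 ≠ none) :
    x.1 = y.1 := by
  rcases h with h | ⟨h, -⟩
  · obtain ⟨i, hi⟩ := Option.ne_none_iff_exists'.1 hx
    obtain ⟨j, hj⟩ := Option.ne_none_iff_exists'.1 hy
    rw [hi, hj] at h
    exact absurd h (star_not_adj_some i j)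
  · exact h

lemma walk_fst_const {m n : ℕ} {T : SimpleGraph (Fin n)} :
    ∀ {x y : Option (Fin m) × Fin n} (p : (lexProd (_root_.starGraph m) T).Walk x y)
      (_ : ∀ z ∈ p.support, z.1 ≠ none), ∀ z ∈ p.support, z.1 = x.1 := by
  intro x y p
  induction p with
  | nil =>
    intro _ z hz
    simp only [Walk.support_nil, List.mem_singleton] at hz
    rw [hz]
  | @cons a u c h q ih =>
    intro hne z hz
    have hsup : ∀ z ∈ q.support, z.1 ≠ none := fun z hz => hne z (by simp [hz])
    have hau : a.1 = u.1 := lex_step_fst h (hne a (by simp)) (hne u (by simp))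
    rw [Walk.support_cons] at hz
    rcases List.mem_cons.1 hz with rfl | hz
    · rfl
    · rw [ih hsup z hz, ← hau]

lemma walk_snd_reach {m n : ℕ} {T : SimpleGraph (Fin n)} (s' : Set (Fin n)) :
    ∀ {x y : Option (Fin m) × Fin n} (p : (lexProd (_root_.starGraph m) T).Walk x y)
      (_ : ∀ z ∈ p.support, z.1 = x.1 ∧ z.2 ∈ s') (hx : x.2 ∈ s') (hy : y.2 ∈ s'),
      (T.induce s').Reachable ⟨x.2, hx⟩ ⟨y.2, hy⟩ := by
  intro x y p
  induction p with
  | nil => intro _ _ _; rfl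
  | @cons a u c h q ih =>
    intro hsup hx hy
    have hau : a.1 = u.1 := ((hsup u (by simp)).1).symm
    have h2 : ∀ z ∈ q.support, z.1 = u.1 ∧ z.2 ∈ s' := by
      intro z hz
      obtain ⟨h1, h2⟩ := hsup z (by simp [hz])
      exact ⟨h1.trans hau, h2⟩
    have hu : u.2 ∈ s' := (hsup u (by simp)).2
    have hadj : (T.induce s').Adj ⟨a.2, hx⟩ ⟨u.2, hu⟩ := by
      simpa using lex_step h hau
    exact hadj.reachable.trans (ih h2 hu hy)

lemma grid_bound {m n k : ℕ} {T : SimpleGraph (Fin n)} (hT : T.IsTree)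
    (h : (gridGraph k).IsMinorOf (lexProd (_root_.starGraph m) T)) : (k - 1) ^ 2 ≤ 3 * n := by
  classical
  obtain ⟨B, hconn, hdisj, hedge⟩ := h
  set L := lexProd (_root_.starGraph m) T with hL
  have hBne : ∀ v, (B v).Nonempty := by
    intro v
    obtain ⟨⟨x, hx⟩⟩ := (hconn v).nonempty
    exact ⟨x, hx⟩
  set S : Finset (Fin k × Fin k) := Finset.univ.filter (fun v => ∃ t, (none, t) ∈ B v) with hSdef
  -- S is small
  have hScard : S.card ≤ n := by
    have hnn : Nonempty (Fin n) := hT.isConnected.nonempty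
    have hex : ∀ v, v ∈ S → ∃ t : Fin n, (none, t) ∈ B v := by
      intro v hv
      exact (Finset.mem_filter.1 hv).2
    choose! g hg using hex
    have := Finset.card_le_card_of_injOn (s := S) (t := Finset.univ) g
      (fun _ _ => Finset.mem_univ _) ?_
    · simpa using this
    · intro v hv w hw hgvw
      by_contra hne
      exact Set.disjoint_left.1 (hdisj hne) (hg v hv) (hgvw ▸ hg w hw)
  -- vertices outside S have no centre-fibre elements
  have hnone : ∀ v, v ∉ S → ∀ x ∈ B v, x.1 ≠ none := by
    intro v hv x hx hxn
    refine hv (Finset.mem_filter.2 ⟨Finset.mem_univ _, ⟨x.2, ?_⟩⟩)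
    have : x = (none, x.2) := by rw [← hxn]
    rwa [← this]
  -- common fibre of each branch set
  have hivex : ∀ v : Fin k × Fin k, ∃ o : Option (Fin m), v ∉ S → ∀ x ∈ B v, x.1 = o := by
    intro v
    by_cases hv : v ∈ S
    · exact ⟨none, fun hc => absurd hv hc⟩
    · obtain ⟨x0, hx0⟩ := hBne v
      refine ⟨x0.1, fun _ x hx => ?_⟩
      obtain ⟨w⟩ := (hconn v).preconnected ⟨x0, hx0⟩ ⟨x, hx⟩
      obtain ⟨p, hp⟩ := induce_walk_exists L (B v) w
      exact walk_fst_const p (fun z hz => hnone v hv z (hp z hz)) x p.end_mem_support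
  choose iv hiv using hivex
  set C : (Fin k × Fin k) → Set (Fin n) := fun v => {t | (iv v, t) ∈ B v} with hC
  have hCne : ∀ v, v ∉ S → (C v).Nonempty := by
    intro v hv
    obtain ⟨x0, hx0⟩ := hBne v
    refine ⟨x0.2, ?_⟩
    have h1 : (iv v, x0.2) = x0 := by
      rw [← hiv v hv x0 hx0]
    simpa [hC, h1] using hx0
  have hCconn : ∀ v, v ∉ S → (T.induce (C v)).Connected := by
    intro v hv
    rw [connected_iff]
    constructor
    · rintro ⟨t, ht⟩ ⟨t', ht'⟩
      obtain ⟨w⟩ := (hconn v).preconnected ⟨(iv v, t), ht⟩ ⟨(iv v, t'), ht'⟩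
      obtain ⟨p, hp⟩ := induce_walk_exists L (B v) w
      refine walk_snd_reach (C v) p ?_ ht ht'
      intro z hz
      have hz1 : z.1 = iv v := hiv v hv z (hp z hz)
      refine ⟨hz1, ?_⟩
      have : (iv v, z.2) = z := by rw [← hz1]
      simp only [hC, Set.mem_setOf_eq, this]
      exact hp z hz
    · obtain ⟨t, ht⟩ := hCne v hv
      exact ⟨⟨t, ht⟩⟩
  have hCdisj : ∀ v w, v ≠ w → iv v = iv w → Disjoint (C v) (C w) := by
    intro v w hne hvw
    rw [Set.disjoint_left]
    intro t htv htw
    simp only [hC, Set.mem_setOf_eq] at htv htw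
    rw [hvw] at htv
    exact Set.disjoint_left.1 (hdisj hne) htv htw
  -- cross-edge extraction
  have hcross : ∀ v w : Fin k × Fin k, v ∉ S → w ∉ S → (gridGraph k).Adj v w →
      iv v = iv w ∧ ∃ a ∈ C v, ∃ b ∈ C w, T.Adj a b := by
    intro v w hv hw hadj
    obtain ⟨a, ha, b, hb, hab⟩ := hedge hadj
    have ha1 : a.1 = iv v := hiv v hv a ha
    have hb1 : b.1 = iv w := hiv w hw b hb
    have h1 : a.1 = b.1 := lex_step_fst hab (hnone v hv a ha) (hnone w hw b hb)
    have hTadj : T.Adj a.2 b.2 := lex_step hab h1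
    refine ⟨by rw [← ha1, ← hb1, h1], a.2, ?_, b.2, ?_, hTadj⟩
    · have : (iv v, a.2) = a := by rw [← ha1]
      simpa [hC, this] using ha
    · have : (iv w, b.2) = b := by rw [← hb1]
      simpa [hC, this] using hb
  -- dominoes
  set rel : (Fin k × Fin k) → (Fin k × Fin k) → Prop := fun a b =>
    (a.1 = b.1 ∧ a.2.val + 1 = b.2.val) ∨ (a.2 = b.2 ∧ a.1.val + 1 = b.1.val) with hrel
  set D : Finset ((Fin k × Fin k) × (Fin k × Fin k)) :=
    Finset.univ.filter (fun p => rel p.1 p.2) with hD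
  have hDrel : ∀ p ∈ D, rel p.1 p.2 := fun p hp => (Finset.mem_filter.1 hp).2
  have hDne : ∀ p ∈ D, p.1 ≠ p.2 := by
    intro p hp hpe
    rcases hDrel p hp with ⟨-, h2⟩ | ⟨-, h2⟩ <;> rw [hpe] at h2 <;> omega
  have hDadj : ∀ p ∈ D, (gridGraph k).Adj p.1 p.2 := by
    intro p hp
    exact (SimpleGraph.fromRel_adj _ _ _).2 ⟨hDne p hp, Or.inl (hDrel p hp)⟩
  -- domino count lower bound
  have hDcard : 2 * (k * (k - 1)) ≤ D.card := by
    have hsplitD := Finset.card_filter_add_card_filter_not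
      (s := D) (p := fun p => p.1.1 = p.2.1)
    have hH : k * (k - 1) ≤ (D.filter (fun p => p.1.1 = p.2.1)).card := by
      have hm : ∀ x : Fin k × Fin (k - 1), x ∈ Finset.univ →
          ((x.1, (⟨x.2.val, by have := x.2.isLt; omega⟩ : Fin k)),
           (x.1, (⟨x.2.val + 1, by have := x.2.isLt; omega⟩ : Fin k)))
            ∈ D.filter (fun p => p.1.1 = p.2.1) := by
        rintro ⟨i, j⟩ -
        refine Finset.mem_filter.2 ⟨Finset.mem_filter.2 ⟨Finset.mem_univ _, ?_⟩, rfl⟩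
        exact Or.inl ⟨rfl, rfl⟩
      have := Finset.card_le_card_of_injOn _ hm ?_
      · simpa using this
      · rintro ⟨i, j⟩ - ⟨i', j'⟩ - he
        simp only [Prod.mk.injEq, Fin.mk.injEq] at he
        obtain ⟨⟨h1, h2⟩, -⟩ := he
        simp [Prod.ext_iff, Fin.ext_iff, h1, h2]
    have hV : k * (k - 1) ≤ (D.filter (fun p => ¬ p.1.1 = p.2.1)).card := by
      have hm : ∀ x : Fin k × Fin (k - 1), x ∈ Finset.univ →
          (((⟨x.2.val, by have := x.2.isLt; omega⟩ : Fin k), x.1),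
           ((⟨x.2.val + 1, by have := x.2.isLt; omega⟩ : Fin k), x.1))
            ∈ D.filter (fun p => ¬ p.1.1 = p.2.1) := by
        rintro ⟨i, j⟩ -
        refine Finset.mem_filter.2 ⟨Finset.mem_filter.2 ⟨Finset.mem_univ _, ?_⟩, ?_⟩
        · exact Or.inr ⟨rfl, rfl⟩
        · simp only [Fin.mk.injEq]
          omega
      have := Finset.card_le_card_of_injOn _ hm ?_
      · simpa using this
      · rintro ⟨i, j⟩ - ⟨i', j'⟩ - he
        simp only [Prod.mk.injEq, Fin.mk.injEq] at he
        obtain ⟨⟨h1, h2⟩, -⟩ := he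
        simp [Prod.ext_iff, Fin.ext_iff, h1, h2]
    omega
  -- orientation determines the partner
  have hdet : ∀ p ∈ D, ∀ q ∈ D, (p.1 = q.1 ∨ p.2 = q.2) →
      ((p.1.1 = p.2.1) ↔ (q.1.1 = q.2.1)) → p = q := by
    intro p hp q hq hor hiff
    have hrp := hDrel p hp
    have hrq := hDrel q hq
    obtain ⟨⟨a1, a2⟩, b1, b2⟩ := p
    obtain ⟨⟨c1, c2⟩, d1, d2⟩ := q
    simp only [hrel, Prod.ext_iff, Fin.ext_iff] at hrp hrq hor hiff ⊢
    omega
  -- split the dominoes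
  set DS : Finset ((Fin k × Fin k) × (Fin k × Fin k)) :=
    D.filter (fun p => p.1 ∈ S ∨ p.2 ∈ S) with hDSdef
  set DR : Finset ((Fin k × Fin k) × (Fin k × Fin k)) :=
    D.filter (fun p => ¬(p.1 ∈ S ∨ p.2 ∈ S)) with hDRdef
  have hsplit : DS.card + DR.card = D.card :=
    Finset.card_filter_add_card_filter_not _
  -- dominoes touching S
  have hDScard : DS.card ≤ S.card * 4 := by
    have hm : ∀ p ∈ DS, ((if p.1 ∈ S then p.1 else p.2),
        ((decide (p.1 ∈ S), decide (p.1.1 = p.2.1)) : Bool × Bool)) ∈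
          S ×ˢ (Finset.univ : Finset (Bool × Bool)) := by
      intro p hp
      have h2 := (Finset.mem_filter.1 hp).2
      refine Finset.mem_product.2 ⟨?_, Finset.mem_univ _⟩
      by_cases h1 : p.1 ∈ S
      · rwa [if_pos h1]
      · rw [if_neg h1]; tauto
    have := Finset.card_le_card_of_injOn _ hm ?_
    · simpa [Finset.card_product] using this
    · intro p hp q hq he
      have hpD : p ∈ D := Finset.mem_of_mem_filter _ hp
      have hqD : q ∈ D := Finset.mem_of_mem_filter _ hq
      simp only [Prod.mk.injEq] at he
      obtain ⟨e1, e2, e3⟩ := he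
      rw [decide_eq_decide] at e2 e3
      by_cases h1 : p.1 ∈ S
      · rw [if_pos h1, if_pos (e2.1 h1)] at e1
        exact hdet p hpD q hqD (Or.inl e1) e3
      · rw [if_neg h1, if_neg (fun hq1 => h1 (e2.2 hq1))] at e1
        exact hdet p hpD q hqD (Or.inr e1) e3
  -- the complement of S and its fibres
  set R : Finset (Fin k × Fin k) :=
    Finset.univ.filter (fun v => ¬ ∃ t, (none, t) ∈ B v) with hRdef
  have hRS : ∀ v, v ∈ R ↔ v ∉ S := by
    intro v
    simp [hRdef, hSdef]
  have hRsplit : S.card + R.card = k * k := by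
    have := Finset.card_filter_add_card_filter_not
      (s := (Finset.univ : Finset (Fin k × Fin k))) (p := fun v => ∃ t, (none, t) ∈ B v)
    rw [Finset.card_univ, Fintype.card_prod, Fintype.card_fin] at this
    exact this
  set F : Finset (Option (Fin m)) := R.image iv with hFdef
  have hDRmem : ∀ p ∈ DR, p.1 ∉ S ∧ p.2 ∉ S := by
    intro p hp
    have := (Finset.mem_filter.1 hp).2
    tauto
  have hsum1 : DR.card = ∑ o ∈ F, (DR.filter (fun p => iv p.1 = o)).card :=
    Finset.card_eq_sum_card_fiberwise (fun p hp =>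
      Finset.mem_image.2 ⟨p.1, (hRS p.1).2 (hDRmem p hp).1, rfl⟩)
  have hsum2 : R.card = ∑ o ∈ F, (R.filter (fun v => iv v = o)).card :=
    Finset.card_eq_sum_card_fiberwise (fun v hv => Finset.mem_image.2 ⟨v, hv, rfl⟩)
  have hper : ∀ o ∈ F, (DR.filter (fun p => iv p.1 = o)).card + 1 ≤
      (R.filter (fun v => iv v = o)).card := by
    intro o ho
    obtain ⟨v0, hv0R, hv0⟩ := Finset.mem_image.1 ho
    refine contract_forest hT (R.filter (fun v => iv v = o))
      ⟨v0, Finset.mem_filter.2 ⟨hv0R, hv0⟩⟩ C ?_ ?_ (DR.filter (fun p => iv p.1 = o)) ?_ ?_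
    · intro v hv w hw hne
      have hv' := Finset.mem_filter.1 hv
      have hw' := Finset.mem_filter.1 hw
      exact hCdisj v w hne (hv'.2.trans hw'.2.symm)
    · intro v hv
      exact hCconn v ((hRS v).1 (Finset.mem_filter.1 hv).1)
    · intro p hp
      have hpDR : p ∈ DR := Finset.mem_of_mem_filter _ hp
      have ho1 : iv p.1 = o := (Finset.mem_filter.1 hp).2
      have hpD : p ∈ D := Finset.mem_of_mem_filter _ hpDR
      obtain ⟨h1, h2⟩ := hDRmem p hpDR
      obtain ⟨hivv, hcr⟩ := hcross p.1 p.2 h1 h2 (hDadj p hpD)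
      exact ⟨Finset.mem_filter.2 ⟨(hRS _).2 h1, ho1⟩,
        Finset.mem_filter.2 ⟨(hRS _).2 h2, hivv ▸ ho1⟩, hDne p hpD, hcr⟩
    · intro p hp q hq h1 h2
      exfalso
      have hrp := hDrel p (Finset.mem_of_mem_filter _ (Finset.mem_of_mem_filter _ hp))
      have hrq := hDrel q (Finset.mem_of_mem_filter _ (Finset.mem_of_mem_filter _ hq))
      rw [← h1, ← h2] at hrq
      obtain ⟨⟨a1, a2⟩, b1, b2⟩ := p
      simp only [hrel, Prod.ext_iff, Fin.ext_iff] at hrp hrq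
      omega
  have hDRcard : DR.card + F.card ≤ R.card := by
    rw [hsum1, hsum2]
    calc (∑ o ∈ F, (DR.filter (fun p => iv p.1 = o)).card) + F.card
        = ∑ o ∈ F, ((DR.filter (fun p => iv p.1 = o)).card + 1) := by
          rw [Finset.sum_add_distrib, Finset.sum_const, smul_eq_mul, mul_one]
      _ ≤ ∑ o ∈ F, (R.filter (fun v => iv v = o)).card := Finset.sum_le_sum hper
  -- final arithmetic
  rcases Nat.eq_zero_or_pos k with rfl | hk
  · simp
  obtain ⟨t, rfl⟩ : ∃ t, k = t + 1 := ⟨k - 1, by omega⟩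
  have hgoal : (t + 1 - 1) ^ 2 = t * t := by simp [pow_two]
  rw [hgoal]
  have hkk : (t + 1) * (t + 1) = t * t + 2 * t + 1 := by ring
  have hkk2 : (t + 1) * ((t + 1) - 1) = t * t + t := by simp; ring
  rw [hkk2] at hDcard
  rw [hkk] at hRsplit
  by_cases hFe : F = ∅
  · have hDR0 : DR.card = 0 := by rw [hsum1, hFe]; simp
    generalize t * t = P at hDcard ⊢
    omega
  · have hF1 : 1 ≤ F.card := Finset.card_pos.2 (Finset.nonempty_iff_ne_empty.2 hFe)
    generalize t * t = P at hDcard hRsplit ⊢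
    omega

lemma minor_mono {α β : Type*} {G : SimpleGraph α} {H H' : SimpleGraph β}
    (h : G.IsMinorOf H) (hle : H ≤ H') : G.IsMinorOf H' := by
  obtain ⟨B, h1, h2, h3⟩ := h
  refine ⟨B, fun x => (h1 x).mono ?_, h2, fun x y hxy => ?_⟩
  · intro a b hab
    exact hle hab
  · obtain ⟨a, ha, b, hb, hab⟩ := h3 hxy
    exact ⟨a, ha, b, hb, hle hab⟩

lemma box_le_strong {α β : Type*} (G : SimpleGraph α) (H : SimpleGraph β) :
    G.boxProd H ≤ strongProd G H := by
  intro a b hab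
  rcases boxProd_adj.1 hab with ⟨h1, h2⟩ | ⟨h1, h2⟩
  · exact Or.inr (Or.inl ⟨h2, h1⟩)
  · exact Or.inl ⟨h2, h1⟩

lemma strong_le_lex {α β : Type*} (G : SimpleGraph α) (H : SimpleGraph β) :
    strongProd G H ≤ lexProd G H := by
  intro a b hab
  rcases hab with ⟨h1, h2⟩ | ⟨h1, h2⟩ | ⟨h1, h2⟩
  · exact Or.inr ⟨h1, h2⟩
  · exact Or.inl h2
  · exact Or.inl h1

lemma grid_zero_minor {β : Type*} (H : SimpleGraph β) : (gridGraph 0).IsMinorOf H :=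
  ⟨fun v => v.1.elim0, fun v => v.1.elim0, fun v _ _ => v.1.elim0, fun v _ _ => v.1.elim0⟩


end Helpers

/-- For any star `S` and any tree `T` on `n` vertices,
`gm(S □ T) ≤ gm(S ⊠ T) ≤ gm(S · T) < √(3n+1) + 1`. -/
theorem stmt12 (m n : ℕ) (T : SimpleGraph (Fin n)) (hT : T.IsTree) :
    gridMinorNum ((_root_.starGraph m).boxProd T) ≤ gridMinorNum (strongProd (_root_.starGraph m) T) ∧
    gridMinorNum (strongProd (_root_.starGraph m) T) ≤ gridMinorNum (lexProd (_root_.starGraph m) T) ∧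
    (gridMinorNum (lexProd (_root_.starGraph m) T) : ℝ) < Real.sqrt (3 * n + 1) + 1 := by
  unfold gridMinorNum
  set L1 := { k | (gridGraph k).IsMinorOf ((_root_.starGraph m).boxProd T) }
  set L2 := { k | (gridGraph k).IsMinorOf (strongProd (_root_.starGraph m) T) }
  set L3 := { k | (gridGraph k).IsMinorOf (lexProd (_root_.starGraph m) T) }
  have h12 : L1 ⊆ L2 := fun k hk => minor_mono hk (box_le_strong _ _)
  have h23 : L2 ⊆ L3 := fun k hk => minor_mono hk (strong_le_lex _ _)
  have hbound : ∀ k ∈ L3, (k - 1) ^ 2 ≤ 3 * n := fun k hk => grid_bound hT hk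
  have hBdd3 : BddAbove L3 := by
    refine ⟨3 * n + 1, fun k hk => ?_⟩
    have h1 := hbound k hk
    have h2 : k - 1 ≤ (k - 1) ^ 2 := Nat.le_self_pow two_ne_zero _
    omega
  have hBdd2 : BddAbove L2 := hBdd3.mono h23
  have hne1 : L1.Nonempty := ⟨0, grid_zero_minor _⟩
  have hne2 : L2.Nonempty := ⟨0, grid_zero_minor _⟩
  have hne3 : L3.Nonempty := ⟨0, grid_zero_minor _⟩
  refine ⟨csSup_le_csSup hBdd2 hne1 h12, csSup_le_csSup hBdd3 hne2 h23, ?_⟩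
  have hmem : sSup L3 ∈ L3 := Nat.sSup_mem hne3 hBdd3
  set k := sSup L3
  have hk := hbound k hmem
  have hsq : ((k - 1 : ℕ) : ℝ) < Real.sqrt (3 * n + 1) := by
    have h2 : (((k - 1 : ℕ) : ℝ)) ^ 2 < 3 * n + 1 := by
      have : (((k - 1) ^ 2 : ℕ) : ℝ) ≤ ((3 * n : ℕ) : ℝ) := by exact_mod_cast hk
      push_cast at this
      nlinarith
    exact (Real.lt_sqrt (Nat.cast_nonneg _)).2 h2
  have hfin : (k : ℝ) ≤ ((k - 1 : ℕ) : ℝ) + 1 := by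
    have : k ≤ (k - 1) + 1 := by omega
    exact_mod_cast this
  linarith
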